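/- Let $\lambda_b > 0$, $\rho_b > 0$, $\rho_s > 0$ with $\rho_s \ne 2$ and $2 + \rho_b \ne \rho_s$, and let $P_J : [0, \infty) \to \mathbb{R}$ be given by $P_J(r_s) = 1 - 2\big[ \frac{e^{-f_s(\rho_b + 2)} - e^{-f_s \rho_s}}{2 + \rho_b - \rho_s} + \frac{e^{-2 f_s}}{\rho_s + 2} + \frac{1 - e^{-f_s(\rho_b + 2)}}{\rho_b + 2} + \frac{e^{-2 f_s} - e^{-f_s \rho_s}}{\rho_s - 2} \big]$ with $f_s = \lambda_b r_s$. Then $r_s > 0$ satisfies $\frac{d P_J}{d r_s}(r_s) = 0$ if and only if $x_0 := e^{-\rho_b \lambda_b r_s}$ satisfies the Lambert-type equation $x_0^{a} = a \, x_0 + c$, where $a = \frac{\rho_s - 2}{\rho_b}$ and $c = \frac{4(1 - a)}{\rho_s + 2}$. -/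

import Mathlib

open Real

/-- **Lemma 3 (first-order optimality condition).**  A positive RIS distance `rs`
is a stationary point of the closed-form connection failure probability `P_J` iff
`x₀ = e^{−ρb·λb·rs}` solves the Lambert-type equation `x₀^a = a·x₀ + c`. -/
theorem optimal_ris_distance_lambert
    (lb ρb ρs : ℝ) (hlb : 0 < lb) (hρb : 0 < ρb) (hρs : 0 < ρs)
    (hne : ρs ≠ 2) (hne' : 2 + ρb ≠ ρs)
    (PJ : ℝ → ℝ)
    (hPJ : ∀ rs : ℝ, PJ rs =
      1 - 2 * ((exp (-(lb * rs) * (ρb + 2)) - exp (-(lb * rs) * ρs)) / (2 + ρb - ρs)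
        + exp (-2 * (lb * rs)) / (ρs + 2)
        + (1 - exp (-(lb * rs) * (ρb + 2))) / (ρb + 2)
        + (exp (-2 * (lb * rs)) - exp (-(lb * rs) * ρs)) / (ρs - 2)))
    (a c : ℝ) (ha : a = (ρs - 2) / ρb) (hc : c = 4 * (1 - a) / (ρs + 2)) :
    ∀ rs : ℝ, 0 < rs →
      (deriv PJ rs = 0 ↔ (exp (-(ρb * lb * rs))) ^ a = a * exp (-(ρb * lb * rs)) + c) := by
  intro rs _
  have hfun : PJ = fun rs => 1 - 2 * ((exp (-(lb * rs) * (ρb + 2)) - exp (-(lb * rs) * ρs)) / (2 + ρb - ρs)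
        + exp (-2 * (lb * rs)) / (ρs + 2)
        + (1 - exp (-(lb * rs) * (ρb + 2))) / (ρb + 2)
        + (exp (-2 * (lb * rs)) - exp (-(lb * rs) * ρs)) / (ρs - 2)) := funext hPJ
  -- basic nonzero facts
  have hd1 : (2 + ρb - ρs) ≠ 0 := sub_ne_zero.mpr hne'
  have hd2 : (ρs + 2) ≠ 0 := by positivity
  have hd3 : (ρb + 2) ≠ 0 := by positivity
  have hd4 : (ρs - 2) ≠ 0 := sub_ne_zero.mpr hne
  have hρb' : ρb ≠ 0 := ne_of_gt hρb
  -- derivatives of the exponential pieces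
  have h1 : HasDerivAt (fun r : ℝ => exp (-(lb * r) * (ρb + 2)))
      (exp (-(lb * rs) * (ρb + 2)) * (-lb * (ρb + 2))) rs := by
    have : HasDerivAt (fun r : ℝ => -(lb * r) * (ρb + 2)) (-lb * (ρb + 2)) rs := by
      simpa using (((hasDerivAt_id rs).const_mul lb).neg.mul_const (ρb + 2))
    simpa using this.exp
  have h2 : HasDerivAt (fun r : ℝ => exp (-(lb * r) * ρs))
      (exp (-(lb * rs) * ρs) * (-lb * ρs)) rs := by
    have : HasDerivAt (fun r : ℝ => -(lb * r) * ρs) (-lb * ρs) rs := by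
      simpa using (((hasDerivAt_id rs).const_mul lb).neg.mul_const ρs)
    simpa using this.exp
  have h3 : HasDerivAt (fun r : ℝ => exp (-2 * (lb * r)))
      (exp (-2 * (lb * rs)) * (-2 * lb)) rs := by
    have : HasDerivAt (fun r : ℝ => -2 * (lb * r)) (-2 * lb) rs := by
      simpa [mul_assoc] using (((hasDerivAt_id rs).const_mul lb).const_mul (-2))
    simpa using this.exp
  set d1 := exp (-(lb * rs) * (ρb + 2)) * (-lb * (ρb + 2)) with hd1def
  set d2 := exp (-(lb * rs) * ρs) * (-lb * ρs) with hd2def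
  set d3 := exp (-2 * (lb * rs)) * (-2 * lb) with hd3def
  have hD : HasDerivAt PJ
      (-(2 * ((d1 - d2) / (2 + ρb - ρs) + d3 / (ρs + 2) + (-d1) / (ρb + 2)
        + (d3 - d2) / (ρs - 2)))) rs := by
    rw [hfun]
    have inner : HasDerivAt (fun r : ℝ =>
        (exp (-(lb * r) * (ρb + 2)) - exp (-(lb * r) * ρs)) / (2 + ρb - ρs)
        + exp (-2 * (lb * r)) / (ρs + 2)
        + (1 - exp (-(lb * r) * (ρb + 2))) / (ρb + 2)
        + (exp (-2 * (lb * r)) - exp (-(lb * r) * ρs)) / (ρs - 2))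
        ((d1 - d2) / (2 + ρb - ρs) + d3 / (ρs + 2) + (-d1) / (ρb + 2)
        + (d3 - d2) / (ρs - 2)) rs := by
      exact ((((h1.sub h2).div_const _).add (h3.div_const _)).add
        ((h1.neg.const_add 1).div_const _)).add ((h3.sub h2).div_const _)
    simpa using (inner.const_mul 2).const_sub 1
  rw [hD.deriv]
  -- abbreviations
  set x := exp (-(ρb * lb * rs)) with hx
  set w := exp (-2 * (lb * rs)) with hw
  have hxpos : 0 < x := exp_pos _
  have hwpos : 0 < w := exp_pos _
  have hE1 : exp (-(lb * rs) * (ρb + 2)) = x * w := by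
    rw [hx, hw, ← exp_add]; ring_nf
  have hX : x ^ a = exp ((-(ρb * lb * rs)) * a) := (Real.exp_mul _ a).symm
  have hE2 : exp (-(lb * rs) * ρs) = x ^ a * w := by
    rw [hX, hw, ← exp_add]
    congr 1
    field_simp [ha]
    rw [ha, mul_div_cancel₀ _ hρb']; ring
  -- rewrite derivative as constant times (x^a - (a*x + c))
  have key : -(2 * ((d1 - d2) / (2 + ρb - ρs) + d3 / (ρs + 2) + (-d1) / (ρb + 2)
        + (d3 - d2) / (ρs - 2)))
      = (-2 * lb * w * ρs * ρb / ((2 + ρb - ρs) * (ρs - 2))) * (x ^ a - (a * x + c)) := by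
    rw [hd1def, hd2def, hd3def, hE1, hE2, ha, hc, ha]
    field_simp
    ring
  rw [key]
  have hC : (-2 * lb * w * ρs * ρb / ((2 + ρb - ρs) * (ρs - 2))) ≠ 0 := by
    apply div_ne_zero
    · have : (0:ℝ) < 2 * lb * w * ρs * ρb := by positivity
      intro h; nlinarith
    · exact mul_ne_zero hd1 hd4
  rw [mul_eq_zero]
  constructor
  · rintro (h | h)
    · exact absurd h hC
    · linarith [sub_eq_zero.mp h]
  · intro h; right; rw [h]; ring
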